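/- The partial-sum sequence ϑ_m = Σ_{s=0}^{m} θ_s is strictly positive and strictly decreasing: ϑ_0 > ϑ_1 > ⋯ > ϑ_m > ⋯ > 0. -/
import Mathlib


/-- The sequence `θ_m`. -/
noncomputable def seqTheta (α : ℝ) : ℕ → ℝ
  | 0 => ((α + 1) / (2 * α)) ^ α
  | 1 => (α - 1) * (2 * α + 1) / (α + 1) * seqTheta α 0
  | (m + 2) =>
      2 * α / (((m : ℝ) + 2) * (1 + α)) *
        (((((m : ℝ) + 2) - 1) / α - (1 - α) / (2 * α) * (2 * α + 1)) * seqTheta α (m + 1) +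
          (1 - α) / (2 * α) * (3 - ((m : ℝ) + 2)) * seqTheta α m)

/-- The partial sums `ϑ_m = Σ_{s=0}^m θ_s`. -/
noncomputable def varTheta (α : ℝ) (m : ℕ) : ℝ := ∑ s ∈ Finset.range (m + 1), seqTheta α s

section
variable (α : ℝ)

lemma vt_succ (m : ℕ) : varTheta α (m + 1) = varTheta α m + seqTheta α (m + 1) := by
  simp [varTheta, Finset.sum_range_succ]

lemma theta0_pos (hα : α ∈ Set.Ioo (0:ℝ) 1) : 0 < seqTheta α 0 := by
  have h0 : (0:ℝ) < α := hα.1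
  show (0:ℝ) < ((α + 1) / (2 * α)) ^ α
  exact Real.rpow_pos_of_pos (by positivity) α

lemma recT (hα : α ∈ Set.Ioo (0:ℝ) 1) (k : ℕ) :
    (1 + α) * ((k : ℝ) + 3) * seqTheta α (k + 3)
      = (2 * (k : ℝ) + 4 - (1 - α) * (2 * α + 1)) * seqTheta α (k + 2)
        - (1 - α) * (k : ℝ) * seqTheta α (k + 1) := by
  have h0 : α ≠ 0 := ne_of_gt hα.1
  have h1 : 1 + α ≠ 0 := by nlinarith [hα.1]
  have e : seqTheta α (k + 3) =
      2 * α / ((((k+1 : ℕ) : ℝ) + 2) * (1 + α)) *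
        ((((((k+1:ℕ) : ℝ) + 2) - 1) / α - (1 - α) / (2 * α) * (2 * α + 1)) * seqTheta α (k + 2) +
          (1 - α) / (2 * α) * (3 - (((k+1:ℕ) : ℝ) + 2)) * seqTheta α (k + 1)) := rfl
  rw [e]
  push_cast
  field_simp
  ring

lemma vt1 (hα : α ∈ Set.Ioo (0:ℝ) 1) :
    varTheta α 1 = 2 * α ^ 2 / (1 + α) * seqTheta α 0 := by
  have h1 : 1 + α ≠ 0 := by nlinarith [hα.1]
  have h1' : α + 1 ≠ 0 := by nlinarith [hα.1]
  have e1 : seqTheta α 1 = (α - 1) * (2 * α + 1) / (α + 1) * seqTheta α 0 := rfl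
  rw [show varTheta α 1 = seqTheta α 0 + seqTheta α 1 by
        simp [varTheta, Finset.sum_range_succ], e1]
  field_simp
  ring

lemma recV (hα : α ∈ Set.Ioo (0:ℝ) 1) (k : ℕ) :
    (1 + α) * ((k : ℝ) + 2) * varTheta α (k + 2)
      = (2 * (k : ℝ) + 2 + 2 * α ^ 2) * varTheta α (k + 1)
        - (1 - α) * (k : ℝ) * varTheta α k := by
  have h0 : α ≠ 0 := ne_of_gt hα.1
  have h1 : 1 + α ≠ 0 := by nlinarith [hα.1]
  have h1' : α + 1 ≠ 0 := by nlinarith [hα.1]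
  induction k with
  | zero =>
    have e2 : seqTheta α 2 =
        2 * α / ((((0:ℕ) : ℝ) + 2) * (1 + α)) *
          ((((((0:ℕ) : ℝ) + 2) - 1) / α - (1 - α) / (2 * α) * (2 * α + 1)) * seqTheta α 1 +
            (1 - α) / (2 * α) * (3 - (((0:ℕ) : ℝ) + 2)) * seqTheta α 0) := rfl
    have e1 : seqTheta α 1 = (α - 1) * (2 * α + 1) / (α + 1) * seqTheta α 0 := rfl
    rw [show (2:ℕ) = 1 + 1 from rfl, vt_succ, vt_succ]
    rw [show varTheta α 0 = seqTheta α 0 by simp [varTheta], e2, e1]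
    push_cast
    field_simp
    ring
  | succ k ih =>
    have hv3 := vt_succ α (k + 2)
    have hv2 := vt_succ α (k + 1)
    have hv1 := vt_succ α k
    have hT := recT α hα k
    have t2 : seqTheta α (k + 2) = varTheta α (k + 2) - varTheta α (k + 1) := by
      rw [hv2]; ring
    have t1 : seqTheta α (k + 1) = varTheta α (k + 1) - varTheta α k := by
      rw [hv1]; ring
    rw [t2, t1] at hT
    rw [show k + 1 + 2 = k + 2 + 1 from rfl, hv3]
    push_cast
    push_cast at hT ih
    linear_combination hT + ih

end

lemma mainQ (hα : α ∈ Set.Ioo (0:ℝ) 1) (m : ℕ) :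
    0 < varTheta α (m + 1) ∧
      ((m : ℝ) + 1 + α) * varTheta α (m + 1) < ((m : ℝ) + 2) * varTheta α (m + 2) ∧
      varTheta α (m + 2) < varTheta α (m + 1) := by
  have ha0 : 0 < α := hα.1
  have ha1 : α < 1 := hα.2
  induction m with
  | zero =>
    have hp := theta0_pos α hα
    have h1 := vt1 α hα
    have hR := recV α hα 0
    push_cast at hR ⊢
    have hv1pos : 0 < varTheta α 1 := by
      rw [h1]; positivity
    refine ⟨hv1pos, ?_, ?_⟩
    · nlinarith [hR, hv1pos, sq_nonneg (1 - α), mul_pos hv1pos (mul_pos (sub_pos.2 ha1) (sub_pos.2 ha1))]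
    · nlinarith [hR, hv1pos, mul_pos ha0 (sub_pos.2 ha1)]
  | succ m ih =>
    obtain ⟨hV1, hratio, hdec⟩ := ih
    set V1 := varTheta α (m + 1) with hV1def
    set V2 := varTheta α (m + 2) with hV2def
    set V3 := varTheta α (m + 3) with hV3def
    have hR := recV α hα (m + 1)
    push_cast at hR ⊢
    have hn : (0:ℝ) ≤ (m:ℝ) := Nat.cast_nonneg m
    have hV2 : 0 < V2 := by nlinarith
    have key : (1 + α) * ((m:ℝ) + 3) * (V2 - V3)
        = 2 * α * (1 - α) * V2 + (1 - α) * ((m:ℝ) + 1) * (V1 - V2) := by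
      linear_combination -hR
    have key2 : (1 + α) * ((m:ℝ) + 1 + α) * (((m:ℝ) + 3) * V3 - ((m:ℝ) + 2 + α) * V2)
        = α * (1 - α) ^ 2 * V2
          + (1 - α) * ((m:ℝ) + 1) * (((m:ℝ) + 2) * V2 - ((m:ℝ) + 1 + α) * V1) := by
      linear_combination ((m:ℝ) + 1 + α) * hR
    have hfac : (0:ℝ) < (1 + α) * ((m:ℝ) + 3) := by positivity
    have hfac2 : (0:ℝ) < (1 + α) * ((m:ℝ) + 1 + α) := by positivity
    have hpos1 : 0 < 2 * α * (1 - α) * V2 + (1 - α) * ((m:ℝ) + 1) * (V1 - V2) := by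
      have hX := sub_pos.2 hdec
      nlinarith [mul_pos (mul_pos (sub_pos.2 ha1) (by positivity : (0:ℝ) < (m:ℝ) + 1)) hX,
        mul_pos (mul_pos ha0 (sub_pos.2 ha1)) hV2]
    have hpos2 : 0 < α * (1 - α) ^ 2 * V2
        + (1 - α) * ((m:ℝ) + 1) * (((m:ℝ) + 2) * V2 - ((m:ℝ) + 1 + α) * V1) := by
      have hX := sub_pos.2 hratio
      nlinarith [mul_pos (mul_pos (sub_pos.2 ha1) (by positivity : (0:ℝ) < (m:ℝ) + 1)) hX,
        mul_pos (mul_pos ha0 (mul_pos (sub_pos.2 ha1) (sub_pos.2 ha1))) hV2]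
    refine ⟨hV2, ?_, ?_⟩
    · nlinarith [key2, hpos2, hfac2]
    · nlinarith [key, hpos1, hfac]



theorem varTheta_pos_strict_anti (α : ℝ) (hα : α ∈ Set.Ioo (0 : ℝ) 1) :
    (∀ m : ℕ, 0 < varTheta α m) ∧ (∀ m : ℕ, varTheta α (m + 1) < varTheta α m) := by
  obtain ⟨ha0, ha1⟩ := hα
  have hα' : α ∈ Set.Ioo (0:ℝ) 1 := ⟨ha0, ha1⟩
  have hp := theta0_pos α hα'
  have hv0 : varTheta α 0 = seqTheta α 0 := by simp [varTheta]
  constructor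
  · intro m
    match m with
    | 0 => rw [hv0]; exact hp
    | m + 1 => exact (mainQ hα' m).1
  · intro m
    match m with
    | 0 =>
      have h1 := vt1 α hα'
      rw [h1, hv0]
      rw [div_mul_eq_mul_div, div_lt_iff₀ (by nlinarith)]
      nlinarith [mul_pos (mul_pos (sub_pos.2 ha1) (by linarith : (0:ℝ) < 1 + 2 * α)) hp]
    | m + 1 => exact (mainQ hα' m).2.2
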